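/- Suppose (f,g,h) : [a,b] → ℍ is a horizontal curve (so h' = 2(f'g − g'f) a.e.) and f', g' are (m−1)-times L^{1,ω} differentiable at x ∈ (a,b), m ≥ 2. Let P, Q be the m-th order L^{1,ω} derivatives at x of f, g respectively, let R := 2(P'Q − Q'P), and let R̃ be the polynomial of degree at most m−1 such that R − R̃ is divisible by (y−x)^m. Then h' is (m−1)-times L^{1,ω} differentiable at x with L^{1,ω} derivative R̃. -/

import Mathlib

open MeasureTheory Polynomial

/-- If (f,g,h) : [a,b] → ℍ is horizontal (h' = 2(f'g − g'f) a.e.) and P, Q are the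
m-th order L^{1,ω} derivatives at x of f, g (degree ≤ m, approximating f, g and
f', g' at the appropriate rates), R := 2(P'Q − Q'P), and Rt is the polynomial of degree
≤ m−1 with (y−x)^m ∣ (R − Rt), then h' is (m−1)-times L^{1,ω} differentiable at x with
L^{1,ω} derivative Rt. -/
theorem vertL1 (a b : ℝ) (m : ℕ) (hm : 2 ≤ m) (ω : ℝ → ℝ)
    (hcont : ContinuousOn ω (Set.Ici 0))
    (hmono : MonotoneOn ω (Set.Ici 0))
    (hconc : ConcaveOn ℝ (Set.Ici 0) ω)
    (h0 : ω 0 = 0)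
    (hpos : ∀ t : ℝ, 0 < t → 0 < ω t)
    (f g f' g' h' : ℝ → ℝ)
    (hfc : ContinuousOn f (Set.Icc a b)) (hgc : ContinuousOn g (Set.Icc a b))
    (hf'int : IntervalIntegrable f' volume a b)
    (hg'int : IntervalIntegrable g' volume a b)
    (hh'int : IntervalIntegrable h' volume a b)
    (hhor : ∀ᵐ t ∂volume, t ∈ Set.Ioo a b → h' t = 2 * (f' t * g t - g' t * f t))
    (x : ℝ) (hx : x ∈ Set.Ioo a b)
    (P Q : Polynomial ℝ) (hPdeg : P.natDegree ≤ m) (hQdeg : Q.natDegree ≤ m)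
    (C ρ₀ : ℝ) (hC : 0 < C) (hρ₀ : 0 < ρ₀)
    (hball : Set.Ioo (x - ρ₀) (x + ρ₀) ⊆ Set.Ioo a b)
    (hPf : ∀ ρ : ℝ, 0 < ρ → ρ < ρ₀ →
      (2 * ρ)⁻¹ * ∫ t in (x - ρ)..(x + ρ), |f t - P.eval t| ≤ C * ω ρ * ρ ^ m)
    (hP'f : ∀ ρ : ℝ, 0 < ρ → ρ < ρ₀ →
      (2 * ρ)⁻¹ * ∫ t in (x - ρ)..(x + ρ), |f' t - (derivative P).eval t|
        ≤ C * ω ρ * ρ ^ (m - 1))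
    (hQg : ∀ ρ : ℝ, 0 < ρ → ρ < ρ₀ →
      (2 * ρ)⁻¹ * ∫ t in (x - ρ)..(x + ρ), |g t - Q.eval t| ≤ C * ω ρ * ρ ^ m)
    (hQ'g : ∀ ρ : ℝ, 0 < ρ → ρ < ρ₀ →
      (2 * ρ)⁻¹ * ∫ t in (x - ρ)..(x + ρ), |g' t - (derivative Q).eval t|
        ≤ C * ω ρ * ρ ^ (m - 1))
    (Rt : Polynomial ℝ) (hRtdeg : Rt.natDegree ≤ m - 1)
    (hdiv : (Polynomial.X - Polynomial.C x) ^ m ∣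
      (2 * (derivative P * Q - derivative Q * P) - Rt)) :
    ∃ C' > 0, ∃ ρ₁ > 0, ∀ ρ : ℝ, 0 < ρ → ρ < ρ₁ →
      (2 * ρ)⁻¹ * ∫ t in (x - ρ)..(x + ρ), |h' t - Rt.eval t|
        ≤ C' * ω ρ * ρ ^ (m - 1) := by
  obtain ⟨hax, hxb⟩ := hx
  have hab : a < b := hax.trans hxb
  -- sup bounds
  obtain ⟨Mf0, hMf0⟩ := isCompact_Icc.exists_bound_of_continuousOn hfc
  obtain ⟨Mg0, hMg0⟩ := isCompact_Icc.exists_bound_of_continuousOn hgc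
  obtain ⟨MP0, hMP0⟩ := isCompact_Icc.exists_bound_of_continuousOn
    ((Polynomial.continuous (derivative P)).continuousOn (s := Set.Icc (x - ρ₀) (x + ρ₀)))
  obtain ⟨MQ0, hMQ0⟩ := isCompact_Icc.exists_bound_of_continuousOn
    ((Polynomial.continuous (derivative Q)).continuousOn (s := Set.Icc (x - ρ₀) (x + ρ₀)))
  obtain ⟨S, hS⟩ := hdiv
  obtain ⟨MS0, hMS0⟩ := isCompact_Icc.exists_bound_of_continuousOn
    ((Polynomial.continuous S).continuousOn (s := Set.Icc (x - ρ₀) (x + ρ₀)))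
  set Mf := max Mf0 0 with hMfdef
  set Mg := max Mg0 0 with hMgdef
  set MP := max MP0 0 with hMPdef
  set MQ := max MQ0 0 with hMQdef
  set MS := max MS0 0 with hMSdef
  have hMfnn : 0 ≤ Mf := le_max_right _ _
  have hMgnn : 0 ≤ Mg := le_max_right _ _
  have hMPnn : 0 ≤ MP := le_max_right _ _
  have hMQnn : 0 ≤ MQ := le_max_right _ _
  have hMSnn : 0 ≤ MS := le_max_right _ _
  have hMf : ∀ t ∈ Set.Icc a b, |f t| ≤ Mf := fun t ht =>
    le_trans (by simpa using hMf0 t ht) (le_max_left _ _)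
  have hMg : ∀ t ∈ Set.Icc a b, |g t| ≤ Mg := fun t ht =>
    le_trans (by simpa using hMg0 t ht) (le_max_left _ _)
  have hMP : ∀ t ∈ Set.Icc (x - ρ₀) (x + ρ₀), |(derivative P).eval t| ≤ MP := fun t ht =>
    le_trans (by simpa using hMP0 t ht) (le_max_left _ _)
  have hMQ : ∀ t ∈ Set.Icc (x - ρ₀) (x + ρ₀), |(derivative Q).eval t| ≤ MQ := fun t ht =>
    le_trans (by simpa using hMQ0 t ht) (le_max_left _ _)
  have hMS : ∀ t ∈ Set.Icc (x - ρ₀) (x + ρ₀), |S.eval t| ≤ MS := fun t ht =>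
    le_trans (by simpa using hMS0 t ht) (le_max_left _ _)
  -- concavity : ρ ≤ K * ω ρ
  have hωρ₀ : 0 < ω ρ₀ := hpos ρ₀ hρ₀
  set K := ρ₀ / ω ρ₀ with hKdef
  have hKpos : 0 < K := div_pos hρ₀ hωρ₀
  have hK : ∀ ρ : ℝ, 0 < ρ → ρ ≤ ρ₀ → ρ ≤ K * ω ρ := by
    intro ρ hρ hle
    have hb1 : 0 ≤ ρ / ρ₀ := by positivity
    have hb2 : ρ / ρ₀ ≤ 1 := (div_le_one hρ₀).mpr hle
    have h1 := hconc.2 (Set.mem_Ici.mpr le_rfl) (Set.mem_Ici.mpr hρ₀.le)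
      (by linarith : (0:ℝ) ≤ 1 - ρ / ρ₀) hb1 (by ring)
    have harg : (1 - ρ / ρ₀) • (0:ℝ) + (ρ / ρ₀) • ρ₀ = ρ := by
      rw [smul_zero, zero_add, smul_eq_mul, div_mul_cancel₀ ρ hρ₀.ne']
    rw [harg, h0, smul_zero, zero_add, smul_eq_mul] at h1
    calc ρ = (ρ₀ / ω ρ₀) * (ρ / ρ₀ * ω ρ₀) := by field_simp
      _ ≤ (ρ₀ / ω ρ₀) * ω ρ := by
          apply mul_le_mul_of_nonneg_left h1 (by positivity)
      _ = K * ω ρ := by rw [hKdef]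
  refine ⟨2*C*Mg + 2*C*Mf + 2*C*ρ₀*MP + 2*C*ρ₀*MQ + MS*K + 1, ?_, ρ₀, hρ₀, ?_⟩
  · have h1 : 0 ≤ 2*C*Mg := by positivity
    have h2 : 0 ≤ 2*C*Mf := by positivity
    have h3 : 0 ≤ 2*C*ρ₀*MP := by positivity
    have h4 : 0 ≤ 2*C*ρ₀*MQ := by positivity
    have h5 : 0 ≤ MS*K := by positivity
    linarith
  intro ρ hρ hρρ₀
  have hIJ : x - ρ ≤ x + ρ := by linarith
  have hsubρ₀ : Set.Icc (x - ρ) (x + ρ) ⊆ Set.Icc (x - ρ₀) (x + ρ₀) := by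
    apply Set.Icc_subset_Icc <;> linarith
  have hsubab : Set.Icc (x - ρ) (x + ρ) ⊆ Set.Ioo a b := by
    intro t ht
    exact hball ⟨by linarith [ht.1], by linarith [ht.2]⟩
  have hsubIcc : Set.Icc (x - ρ) (x + ρ) ⊆ Set.Icc a b := fun t ht =>
    ⟨(hsubab ht).1.le, (hsubab ht).2.le⟩
  have huIcc : Set.uIcc (x - ρ) (x + ρ) ⊆ Set.uIcc a b := by
    rw [Set.uIcc_of_le hIJ, Set.uIcc_of_le hab.le]; exact hsubIcc
  -- integrability
  have int_f' : IntervalIntegrable f' volume (x - ρ) (x + ρ) := hf'int.mono_set huIcc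
  have int_g' : IntervalIntegrable g' volume (x - ρ) (x + ρ) := hg'int.mono_set huIcc
  have int_h' : IntervalIntegrable h' volume (x - ρ) (x + ρ) := hh'int.mono_set huIcc
  have int_f : IntervalIntegrable f volume (x - ρ) (x + ρ) :=
    (hfc.mono (by rw [Set.uIcc_of_le hIJ]; exact hsubIcc)).intervalIntegrable
  have int_g : IntervalIntegrable g volume (x - ρ) (x + ρ) :=
    (hgc.mono (by rw [Set.uIcc_of_le hIJ]; exact hsubIcc)).intervalIntegrable
  have int_P : IntervalIntegrable (fun t => P.eval t) volume (x - ρ) (x + ρ) :=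
    (Polynomial.continuous P).intervalIntegrable _ _
  have int_Q : IntervalIntegrable (fun t => Q.eval t) volume (x - ρ) (x + ρ) :=
    (Polynomial.continuous Q).intervalIntegrable _ _
  have int_P' : IntervalIntegrable (fun t => (derivative P).eval t) volume (x - ρ) (x + ρ) :=
    (Polynomial.continuous _).intervalIntegrable _ _
  have int_Q' : IntervalIntegrable (fun t => (derivative Q).eval t) volume (x - ρ) (x + ρ) :=
    (Polynomial.continuous _).intervalIntegrable _ _
  have int_Rt : IntervalIntegrable (fun t => Rt.eval t) volume (x - ρ) (x + ρ) :=
    (Polynomial.continuous Rt).intervalIntegrable _ _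
  have A1 : IntervalIntegrable (fun t => 2*Mg*|f' t - (derivative P).eval t|)
      volume (x - ρ) (x + ρ) := ((int_f'.sub int_P').abs).const_mul _
  have A2 : IntervalIntegrable (fun t => 2*MP*|g t - Q.eval t|)
      volume (x - ρ) (x + ρ) := ((int_g.sub int_Q).abs).const_mul _
  have A3 : IntervalIntegrable (fun t => 2*Mf*|g' t - (derivative Q).eval t|)
      volume (x - ρ) (x + ρ) := ((int_g'.sub int_Q').abs).const_mul _
  have A4 : IntervalIntegrable (fun t => 2*MQ*|f t - P.eval t|)
      volume (x - ρ) (x + ρ) := ((int_f.sub int_P).abs).const_mul _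
  have A5 : IntervalIntegrable (fun _ : ℝ => MS*ρ^m) volume (x - ρ) (x + ρ) :=
    intervalIntegrable_const
  have habsint : IntervalIntegrable (fun t => |h' t - Rt.eval t|) volume (x - ρ) (x + ρ) :=
    (int_h'.sub int_Rt).abs
  have hφint : IntervalIntegrable (fun t => 2*Mg*|f' t - (derivative P).eval t|
      + 2*MP*|g t - Q.eval t| + 2*Mf*|g' t - (derivative Q).eval t|
      + 2*MQ*|f t - P.eval t| + MS*ρ^m) volume (x - ρ) (x + ρ) :=
    (((A1.add A2).add A3).add A4).add A5
  -- pointwise a.e. bound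
  have hae : (fun t => |h' t - Rt.eval t|) ≤ᵐ[volume.restrict (Set.Icc (x - ρ) (x + ρ))]
      (fun t => 2*Mg*|f' t - (derivative P).eval t| + 2*MP*|g t - Q.eval t|
        + 2*Mf*|g' t - (derivative Q).eval t| + 2*MQ*|f t - P.eval t| + MS*ρ^m) := by
    filter_upwards [ae_restrict_mem measurableSet_Icc, ae_restrict_of_ae hhor] with t ht hhort
    have htab : t ∈ Set.Ioo a b := hsubab ht
    have htIcc : t ∈ Set.Icc a b := hsubIcc ht
    have htρ₀ : t ∈ Set.Icc (x - ρ₀) (x + ρ₀) := hsubρ₀ ht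
    have hRteval : Rt.eval t = 2*((derivative P).eval t * Q.eval t
        - (derivative Q).eval t * P.eval t) - (t - x)^m * S.eval t := by
      have h := congrArg (Polynomial.eval t) hS
      simp only [eval_sub, eval_mul, eval_pow, eval_X, eval_C, eval_ofNat] at h
      linarith
    have key : h' t - Rt.eval t
        = 2*((f' t - (derivative P).eval t) * g t
            + (derivative P).eval t * (g t - Q.eval t)
            - (g' t - (derivative Q).eval t) * f t
            - (derivative Q).eval t * (f t - P.eval t))
          + (t - x)^m * S.eval t := by
      rw [hhort htab, hRteval]; ring
    have b1 : |(f' t - (derivative P).eval t) * g t| ≤ |f' t - (derivative P).eval t| * Mg := by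
      rw [abs_mul]; exact mul_le_mul_of_nonneg_left (hMg t htIcc) (abs_nonneg _)
    have b2 : |(derivative P).eval t * (g t - Q.eval t)| ≤ MP * |g t - Q.eval t| := by
      rw [abs_mul]; exact mul_le_mul_of_nonneg_right (hMP t htρ₀) (abs_nonneg _)
    have b3 : |(g' t - (derivative Q).eval t) * f t| ≤ |g' t - (derivative Q).eval t| * Mf := by
      rw [abs_mul]; exact mul_le_mul_of_nonneg_left (hMf t htIcc) (abs_nonneg _)
    have b4 : |(derivative Q).eval t * (f t - P.eval t)| ≤ MQ * |f t - P.eval t| := by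
      rw [abs_mul]; exact mul_le_mul_of_nonneg_right (hMQ t htρ₀) (abs_nonneg _)
    have b5 : |(t - x)^m * S.eval t| ≤ ρ^m * MS := by
      rw [abs_mul, abs_pow]
      exact mul_le_mul (pow_le_pow_left₀ (abs_nonneg _)
        (abs_le.mpr ⟨by linarith [ht.1], by linarith [ht.2]⟩) m)
        (hMS t htρ₀) (abs_nonneg _) (pow_nonneg hρ.le m)
    have tri : |h' t - Rt.eval t| ≤ 2*(|(f' t - (derivative P).eval t) * g t|
        + |(derivative P).eval t * (g t - Q.eval t)|
        + |(g' t - (derivative Q).eval t) * f t|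
        + |(derivative Q).eval t * (f t - P.eval t)|)
        + |(t - x)^m * S.eval t| := by
      rw [key]
      refine (abs_add_le _ _).trans ?_
      have h2 : |(2:ℝ)*((f' t - (derivative P).eval t) * g t
          + (derivative P).eval t * (g t - Q.eval t)
          - (g' t - (derivative Q).eval t) * f t
          - (derivative Q).eval t * (f t - P.eval t))|
          ≤ 2*(|(f' t - (derivative P).eval t) * g t|
            + |(derivative P).eval t * (g t - Q.eval t)|
            + |(g' t - (derivative Q).eval t) * f t|
            + |(derivative Q).eval t * (f t - P.eval t)|) := by
        rw [abs_mul, abs_two]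
        have e1 := le_abs_self ((f' t - (derivative P).eval t) * g t)
        have e1' := neg_abs_le ((f' t - (derivative P).eval t) * g t)
        have e2 := le_abs_self ((derivative P).eval t * (g t - Q.eval t))
        have e2' := neg_abs_le ((derivative P).eval t * (g t - Q.eval t))
        have e3 := le_abs_self ((g' t - (derivative Q).eval t) * f t)
        have e3' := neg_abs_le ((g' t - (derivative Q).eval t) * f t)
        have e4 := le_abs_self ((derivative Q).eval t * (f t - P.eval t))
        have e4' := neg_abs_le ((derivative Q).eval t * (f t - P.eval t))
        have := abs_le.mpr (show -( |(f' t - (derivative P).eval t) * g t|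
            + |(derivative P).eval t * (g t - Q.eval t)|
            + |(g' t - (derivative Q).eval t) * f t|
            + |(derivative Q).eval t * (f t - P.eval t)|) ≤
            ((f' t - (derivative P).eval t) * g t
            + (derivative P).eval t * (g t - Q.eval t)
            - (g' t - (derivative Q).eval t) * f t
            - (derivative Q).eval t * (f t - P.eval t)) ∧
            ((f' t - (derivative P).eval t) * g t
            + (derivative P).eval t * (g t - Q.eval t)
            - (g' t - (derivative Q).eval t) * f t
            - (derivative Q).eval t * (f t - P.eval t)) ≤
            |(f' t - (derivative P).eval t) * g t|
            + |(derivative P).eval t * (g t - Q.eval t)|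
            + |(g' t - (derivative Q).eval t) * f t|
            + |(derivative Q).eval t * (f t - P.eval t)|
          from ⟨by linarith, by linarith⟩)
        linarith
      linarith
    calc |h' t - Rt.eval t| ≤ _ := tri
      _ ≤ 2*Mg*|f' t - (derivative P).eval t| + 2*MP*|g t - Q.eval t|
          + 2*Mf*|g' t - (derivative Q).eval t| + 2*MQ*|f t - P.eval t| + MS*ρ^m := by
        linarith [b1, b2, b3, b4, b5]
  have hint_le := intervalIntegral.integral_mono_ae_restrict hIJ habsint hφint hae
  have hsplit : (∫ t in (x - ρ)..(x + ρ), (2*Mg*|f' t - (derivative P).eval t|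
      + 2*MP*|g t - Q.eval t| + 2*Mf*|g' t - (derivative Q).eval t|
      + 2*MQ*|f t - P.eval t| + MS*ρ^m))
      = 2*Mg * (∫ t in (x - ρ)..(x + ρ), |f' t - (derivative P).eval t|)
        + 2*MP * (∫ t in (x - ρ)..(x + ρ), |g t - Q.eval t|)
        + 2*Mf * (∫ t in (x - ρ)..(x + ρ), |g' t - (derivative Q).eval t|)
        + 2*MQ * (∫ t in (x - ρ)..(x + ρ), |f t - P.eval t|)
        + MS*ρ^m*(2*ρ) := by
    rw [intervalIntegral.integral_add (((A1.add A2).add A3).add A4) A5,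
        intervalIntegral.integral_add ((A1.add A2).add A3) A4,
        intervalIntegral.integral_add (A1.add A2) A3,
        intervalIntegral.integral_add A1 A2,
        intervalIntegral.integral_const_mul, intervalIntegral.integral_const_mul,
        intervalIntegral.integral_const_mul, intervalIntegral.integral_const_mul,
        intervalIntegral.integral_const]
    simp only [smul_eq_mul]
    ring
  have h2ρ : (0:ℝ) < 2*ρ := by linarith
  have havg : (2*ρ)⁻¹ * ∫ t in (x - ρ)..(x + ρ), |h' t - Rt.eval t|
      ≤ 2*Mg * ((2*ρ)⁻¹ * ∫ t in (x - ρ)..(x + ρ), |f' t - (derivative P).eval t|)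
        + 2*MP * ((2*ρ)⁻¹ * ∫ t in (x - ρ)..(x + ρ), |g t - Q.eval t|)
        + 2*Mf * ((2*ρ)⁻¹ * ∫ t in (x - ρ)..(x + ρ), |g' t - (derivative Q).eval t|)
        + 2*MQ * ((2*ρ)⁻¹ * ∫ t in (x - ρ)..(x + ρ), |f t - P.eval t|)
        + MS*ρ^m := by
    have h1 : (2*ρ)⁻¹ * ∫ t in (x - ρ)..(x + ρ), |h' t - Rt.eval t|
        ≤ (2*ρ)⁻¹ * (∫ t in (x - ρ)..(x + ρ), (2*Mg*|f' t - (derivative P).eval t|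
          + 2*MP*|g t - Q.eval t| + 2*Mf*|g' t - (derivative Q).eval t|
          + 2*MQ*|f t - P.eval t| + MS*ρ^m)) :=
      mul_le_mul_of_nonneg_left hint_le (by positivity)
    rw [hsplit] at h1
    refine h1.trans (le_of_eq ?_)
    field_simp
  -- final numeric estimate
  have hωρ : 0 < ω ρ := hpos ρ hρ
  have hρm1 : (0:ℝ) ≤ ρ^(m-1) := pow_nonneg hρ.le _
  have hpm : ρ^m = ρ * ρ^(m-1) := by
    conv_lhs => rw [show m = m - 1 + 1 from (Nat.succ_pred_eq_of_pos (by omega)).symm]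
    ring
  have hbP' := hP'f ρ hρ hρρ₀
  have hbQ' := hQ'g ρ hρ hρρ₀
  have hbP := hPf ρ hρ hρρ₀
  have hbQ := hQg ρ hρ hρρ₀
  have hstep : 2*Mg * ((2*ρ)⁻¹ * ∫ t in (x - ρ)..(x + ρ), |f' t - (derivative P).eval t|)
        + 2*MP * ((2*ρ)⁻¹ * ∫ t in (x - ρ)..(x + ρ), |g t - Q.eval t|)
        + 2*Mf * ((2*ρ)⁻¹ * ∫ t in (x - ρ)..(x + ρ), |g' t - (derivative Q).eval t|)
        + 2*MQ * ((2*ρ)⁻¹ * ∫ t in (x - ρ)..(x + ρ), |f t - P.eval t|)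
        + MS*ρ^m
      ≤ 2*Mg*(C * ω ρ * ρ^(m-1)) + 2*MP*(C * ω ρ * ρ^m) + 2*Mf*(C * ω ρ * ρ^(m-1))
        + 2*MQ*(C * ω ρ * ρ^m) + MS*ρ^m := by
    have t1 := mul_le_mul_of_nonneg_left hbP' (show (0:ℝ) ≤ 2*Mg by linarith)
    have t2 := mul_le_mul_of_nonneg_left hbQ (show (0:ℝ) ≤ 2*MP by linarith)
    have t3 := mul_le_mul_of_nonneg_left hbQ' (show (0:ℝ) ≤ 2*Mf by linarith)
    have t4 := mul_le_mul_of_nonneg_left hbP (show (0:ℝ) ≤ 2*MQ by linarith)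
    linarith
  have hT2 : 2*MP*(C * ω ρ * ρ^m) ≤ 2*C*ρ₀*MP*(ω ρ * ρ^(m-1)) := by
    rw [hpm]
    calc 2*MP*(C * ω ρ * (ρ * ρ^(m-1))) = (2*C*MP*(ω ρ * ρ^(m-1)))*ρ := by ring
      _ ≤ (2*C*MP*(ω ρ * ρ^(m-1)))*ρ₀ :=
          mul_le_mul_of_nonneg_left hρρ₀.le (by positivity)
      _ = 2*C*ρ₀*MP*(ω ρ * ρ^(m-1)) := by ring
  have hT4 : 2*MQ*(C * ω ρ * ρ^m) ≤ 2*C*ρ₀*MQ*(ω ρ * ρ^(m-1)) := by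
    rw [hpm]
    calc 2*MQ*(C * ω ρ * (ρ * ρ^(m-1))) = (2*C*MQ*(ω ρ * ρ^(m-1)))*ρ := by ring
      _ ≤ (2*C*MQ*(ω ρ * ρ^(m-1)))*ρ₀ :=
          mul_le_mul_of_nonneg_left hρρ₀.le (by positivity)
      _ = 2*C*ρ₀*MQ*(ω ρ * ρ^(m-1)) := by ring
  have hT5 : MS*ρ^m ≤ MS*K*(ω ρ * ρ^(m-1)) := by
    rw [hpm]
    calc MS*(ρ * ρ^(m-1)) = (MS * ρ^(m-1))*ρ := by ring
      _ ≤ (MS * ρ^(m-1))*(K * ω ρ) :=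
          mul_le_mul_of_nonneg_left (hK ρ hρ hρρ₀.le) (by positivity)
      _ = MS*K*(ω ρ * ρ^(m-1)) := by ring
  have hWnn : 0 ≤ ω ρ * ρ^(m-1) := by positivity
  calc (2*ρ)⁻¹ * ∫ t in (x - ρ)..(x + ρ), |h' t - Rt.eval t| ≤ _ := havg
    _ ≤ 2*Mg*(C * ω ρ * ρ^(m-1)) + 2*MP*(C * ω ρ * ρ^m) + 2*Mf*(C * ω ρ * ρ^(m-1))
        + 2*MQ*(C * ω ρ * ρ^m) + MS*ρ^m := hstep
    _ ≤ (2*C*Mg + 2*C*Mf + 2*C*ρ₀*MP + 2*C*ρ₀*MQ + MS*K + 1) * ω ρ * ρ^(m-1) := by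
        linarith [hT2, hT4, hT5, hWnn]
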